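/- Let E be an n-dimensional evolution algebra whose structure matrix A is strictly upper triangular (a_{ij} = 0 for j ≤ i). Then E^{2^{n-1}+1} = 0; i.e., E is nilpotent with nilpotency index at most 2^{n-1}+1. -/

import Mathlib

/-- Evolution algebra multiplication on `Fin n → ℂ` determined by a structure
matrix `A`: basis vectors satisfy `eᵢ · eⱼ = 0` for `i ≠ j` and
`eᵢ · eᵢ = ∑ k, A i k • e k`. -/
noncomputable def eMul {n : ℕ} (A : Matrix (Fin n) (Fin n) ℂ) (x y : Fin n → ℂ) : Fin n → ℂ :=
  fun k => ∑ p, x p * y p * A p k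

/-- Product of two subspaces: the span of all products. -/
noncomputable def sMul {n : ℕ} (A : Matrix (Fin n) (Fin n) ℂ) (S T : Submodule ℂ (Fin n → ℂ)) :
    Submodule ℂ (Fin n → ℂ) :=
  Submodule.span ℂ {z | ∃ x ∈ S, ∃ y ∈ T, z = eMul A x y}

/-- `dPow A k = E⁽ᵏ⁾`: `E⁽¹⁾ = E`, `E⁽ᵏ⁺¹⁾ = E⁽ᵏ⁾E⁽ᵏ⁾` (index 0 is a dummy). -/
noncomputable def dPow {n : ℕ} (A : Matrix (Fin n) (Fin n) ℂ) : ℕ → Submodule ℂ (Fin n → ℂ)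
  | 0 => ⊤
  | 1 => ⊤
  | (k+2) => sMul A (dPow A (k+1)) (dPow A (k+1))

/-- `rPow A k = E^{<k>}`: `E^{<1>} = E`, `E^{<k+1>} = E^{<k>}·E` (index 0 dummy). -/
noncomputable def rPow {n : ℕ} (A : Matrix (Fin n) (Fin n) ℂ) : ℕ → Submodule ℂ (Fin n → ℂ)
  | 0 => ⊤
  | 1 => ⊤
  | (k+2) => sMul A (rPow A (k+1)) ⊤

/-- `pPow A k = Eᵏ`: `E¹ = E`, `Eᵏ = ∑_{i=1}^{k-1} Eⁱ·E^{k-i}` (index 0 dummy). -/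
noncomputable def pPow {n : ℕ} (A : Matrix (Fin n) (Fin n) ℂ) : ℕ → Submodule ℂ (Fin n → ℂ)
  | 0 => ⊤
  | 1 => ⊤
  | (k+2) => ⨆ i : Fin (k+1), sMul A (pPow A (i.1+1)) (pPow A (k+1-i.1))
termination_by k => k
decreasing_by all_goals (have := i.isLt; omega)


/-- The subspace of vectors vanishing on coordinates `< m`. -/
noncomputable def Vsub (n m : ℕ) : Submodule ℂ (Fin n → ℂ) where
  carrier := {x | ∀ k : Fin n, (k : ℕ) < m → x k = 0}
  add_mem' := by intro a b ha hb k hk; simp [ha k hk, hb k hk]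
  zero_mem' := by intro k hk; rfl
  smul_mem' := by intro c a ha k hk; simp [ha k hk]

lemma Vsub_antitone {n : ℕ} {a b : ℕ} (h : a ≤ b) : Vsub n b ≤ Vsub n a :=
  fun x hx k hk => hx k (lt_of_lt_of_le hk h)

lemma Vsub_zero (n : ℕ) : Vsub n 0 = ⊤ := by
  ext x; simp [Vsub]

lemma eMul_mem {n : ℕ} (A : Matrix (Fin n) (Fin n) ℂ)
    (hA : ∀ i j : Fin n, (j : ℕ) ≤ (i : ℕ) → A i j = 0)
    {a b : ℕ} {x y : Fin n → ℂ} (hx : x ∈ Vsub n a) (hy : y ∈ Vsub n b) :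
    eMul A x y ∈ Vsub n (max a b + 1) := by
  intro k hk
  have hk' : (k : ℕ) ≤ max a b := Nat.lt_succ_iff.mp hk
  unfold eMul
  apply Finset.sum_eq_zero
  intro p _
  by_cases hpa : (p : ℕ) < a
  · rw [hx p hpa]; ring
  by_cases hpb : (p : ℕ) < b
  · rw [hy p hpb]; ring
  · have : (k : ℕ) ≤ (p : ℕ) := le_trans hk' (max_le (not_lt.mp hpa) (not_lt.mp hpb))
    rw [hA p k this]; ring

lemma sMul_le_V {n : ℕ} (A : Matrix (Fin n) (Fin n) ℂ)
    (hA : ∀ i j : Fin n, (j : ℕ) ≤ (i : ℕ) → A i j = 0)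
    {a b : ℕ} {S T : Submodule ℂ (Fin n → ℂ)} (hS : S ≤ Vsub n a) (hT : T ≤ Vsub n b) :
    sMul A S T ≤ Vsub n (max a b + 1) := by
  rw [sMul, Submodule.span_le]
  rintro z ⟨x, hx, y, hy, rfl⟩
  exact eMul_mem A hA (hS hx) (hT hy)

lemma pPow_le_V {n : ℕ} (A : Matrix (Fin n) (Fin n) ℂ)
    (hA : ∀ i j : Fin n, (j : ℕ) ≤ (i : ℕ) → A i j = 0) :
    ∀ k : ℕ, pPow A (k + 1) ≤ Vsub n (Nat.clog 2 (k + 1)) := by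
  intro k
  induction k using Nat.strong_induction_on with
  | _ k ih =>
    match k with
    | 0 => simp [pPow, Nat.clog_one_right, Vsub_zero]
    | (k+1) =>
      rw [pPow]
      apply iSup_le
      intro i
      have hi : i.1 ≤ k := Nat.lt_succ_iff.mp i.isLt
      have h1 : pPow A (i.1 + 1) ≤ Vsub n (Nat.clog 2 (i.1 + 1)) := ih i.1 (by omega)
      have h2 : pPow A (k + 1 - i.1) ≤ Vsub n (Nat.clog 2 (k + 1 - i.1)) := by
        have : k + 1 - i.1 = (k - i.1) + 1 := by omega
        rw [this]; exact ih (k - i.1) (by omega)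
      refine le_trans (sMul_le_V A hA h1 h2) (Vsub_antitone ?_)
      set a := Nat.clog 2 (i.1 + 1)
      set b := Nat.clog 2 (k + 1 - i.1)
      have ha : i.1 + 1 ≤ 2 ^ a := Nat.le_pow_clog one_lt_two _
      have hb : k + 1 - i.1 ≤ 2 ^ b := Nat.le_pow_clog one_lt_two _
      have : k + 2 ≤ 2 ^ (max a b + 1) := by
        have h2a : 2 ^ a ≤ 2 ^ max a b := Nat.pow_le_pow_right (by norm_num) (le_max_left a b)
        have h2b : 2 ^ b ≤ 2 ^ max a b := Nat.pow_le_pow_right (by norm_num) (le_max_right a b)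
        calc k + 2 = (i.1 + 1) + (k + 1 - i.1) := by omega
          _ ≤ 2 ^ max a b + 2 ^ max a b := by omega
          _ = 2 ^ (max a b + 1) := by ring
      exact (Nat.clog_le_iff_le_pow one_lt_two).mpr this

/-- an evolution algebra whose structure matrix is strictly upper
triangular is nilpotent with nilpotency index at most `2ⁿ⁻¹ + 1`. -/
theorem strictly_upper_triangular_nilpotent {n : ℕ}
    (A : Matrix (Fin n) (Fin n) ℂ)
    (hA : ∀ i j : Fin n, (j : ℕ) ≤ (i : ℕ) → A i j = 0) :
    pPow A (2 ^ (n - 1) + 1) = ⊥ := by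
  have h := pPow_le_V A hA (2 ^ (n - 1))
  have hclog : n ≤ Nat.clog 2 (2 ^ (n - 1) + 1) := by
    rcases Nat.eq_zero_or_pos n with hn | hn
    · simp [hn]
    · have : 2 ^ (n - 1) < 2 ^ (n - 1) + 1 := Nat.lt_succ_self _
      have := (Nat.lt_clog_iff_pow_lt one_lt_two).mpr this
      omega
  refine le_bot_iff.mp (le_trans h ?_)
  intro x hx
  simp only [Submodule.mem_bot]
  funext k
  exact hx k (lt_of_lt_of_le k.isLt hclog)
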